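/- arXiv:2103.15334 — 3 statements merged into one kernel-verified Lean document; each statement's English description precedes it below -/
import Mathlib

section
/- For any nonnegative integer q and complex numbers x₀, ..., x_q, the identity ∫₀¹ a^q e[a x₀, a x₁, ..., a x_q] da = e[0, x₀, x₁, ..., x_q] holds, where e[·] denotes the divided difference of the exponential function. -/
open scoped BigOperators
open MeasureTheory Finset Function

lemma summable_piProd : ∀ (m : ℕ) (r : Fin m → ℝ), (∀ j, 0 ≤ r j) →
    Summable (fun k : Fin m → ℕ => ∏ j, r j ^ k j / (k j).factorial) := by
  intro m
  induction m with
  | zero => intro r _; exact .of_finite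
  | succ m ih =>
    intro r hr
    rw [← (Fin.consEquiv (fun _ : Fin (m+1) => ℕ)).summable_iff]
    refine ((Real.summable_pow_div_factorial (r 0)).mul_of_nonneg
      (ih (r ∘ Fin.succ) fun j => hr _)
      (fun a => div_nonneg (pow_nonneg (hr 0) _) (by positivity))
      (fun k => prod_nonneg fun j _ => div_nonneg (pow_nonneg (hr _) _)
        (by positivity))).congr fun p => ?_
    simp [Function.comp, Fin.prod_univ_succ, prod_div_distrib, mul_div_mul_comm]

lemma summable_main (q : ℕ) (x : Fin (q+1) → ℂ) :
    Summable (fun k : Fin (q+1) → ℕ =>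
      (∏ j, ‖x j‖ ^ k j) / ((q + ∑ j, k j).factorial : ℝ)) := by
  refine Summable.of_nonneg_of_le (fun k => by positivity) (fun k => ?_)
    (summable_piProd _ (fun j => ‖x j‖) (fun j => norm_nonneg _))
  have h1 : ((∏ j, (k j).factorial : ℕ) : ℝ) ≤ ((q + ∑ j, k j).factorial : ℝ) := by
    exact_mod_cast Nat.le_of_dvd (Nat.factorial_pos _)
      ((Nat.prod_factorial_dvd_factorial_sum _ _).trans
        (Nat.factorial_dvd_factorial (Nat.le_add_left _ _)))
  calc (∏ j, ‖x j‖ ^ k j) / ((q + ∑ j, k j).factorial : ℝ)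
      ≤ (∏ j, ‖x j‖ ^ k j) / ((∏ j, (k j).factorial : ℕ) : ℝ) := by
        apply div_le_div_of_nonneg_left (by positivity) _ h1
        exact_mod_cast Nat.prod_factorial_pos _ _
    _ = ∏ j, (fun j => ‖x j‖) j ^ k j / ((k j).factorial : ℝ) := by
        rw [prod_div_distrib]; push_cast; ring

/-- Divided difference of the exponential function at `q+1` complex points,
given via its power-series expansion. -/
noncomputable def expDD {q : ℕ} (x : Fin (q + 1) → ℂ) : ℂ :=
  ∑' k : Fin (q + 1) → ℕ, (∏ j, x j ^ k j) / ((Nat.factorial (q + ∑ j, k j) : ℂ))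

lemma expDD_smul (q : ℕ) (x : Fin (q+1) → ℂ) (a : ℝ) :
    (a : ℂ) ^ q * expDD (fun j => (a : ℂ) * x j) =
      ∑' k : Fin (q+1) → ℕ, (a : ℂ) ^ (q + ∑ j, k j) *
        ((∏ j, x j ^ k j) / (((q + ∑ j, k j).factorial : ℂ))) := by
  rw [expDD, ← tsum_mul_left]
  congr 1; ext k
  rw [pow_add, ← prod_pow_eq_pow_sum]
  simp only [mul_pow, prod_mul_distrib]
  ring

lemma integral_pow_cplx (N : ℕ) :
    (∫ a in Set.Ioc (0:ℝ) 1, (a : ℂ) ^ N) = 1 / ((N : ℂ) + 1) := by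
  rw [← intervalIntegral.integral_of_le zero_le_one]
  have : (fun a : ℝ => (a : ℂ) ^ N) = fun a : ℝ => ((a ^ N : ℝ) : ℂ) := by
    ext a; push_cast; ring
  rw [this, intervalIntegral.integral_ofReal, integral_pow]
  push_cast; ring

lemma norm_int_le (N : ℕ) (d : ℂ) :
    (∫ a in Set.Ioc (0:ℝ) 1, ‖(a : ℂ) ^ N * d‖) ≤ ‖d‖ := by
  have hm : AEStronglyMeasurable (fun a : ℝ => ‖(a : ℂ) ^ N * d‖)
      (volume.restrict (Set.Ioc (0:ℝ) 1)) :=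
    (((Complex.continuous_ofReal.pow N).mul continuous_const).norm).aestronglyMeasurable
  have hb : ∀ a ∈ Set.Ioc (0:ℝ) 1, ‖‖(a : ℂ) ^ N * d‖‖ ≤ ‖d‖ := by
    intro a ha
    rw [norm_norm, norm_mul, norm_pow, Complex.norm_real, Real.norm_of_nonneg ha.1.le]
    calc a ^ N * ‖d‖ ≤ 1 * ‖d‖ := by
          apply mul_le_mul_of_nonneg_right (pow_le_one₀ ha.1.le ha.2) (norm_nonneg _)
      _ = ‖d‖ := one_mul _
  have h := norm_setIntegral_le_of_norm_le_const (C := ‖d‖)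
    (by simp [Real.volume_Ioc] : volume (Set.Ioc (0:ℝ) 1) < ⊤) hb
  rw [Real.norm_eq_abs] at h
  have h2 : volume.real (Set.Ioc (0:ℝ) 1) = 1 := by simp [Measure.real, Real.volume_Ioc]
  rw [h2, mul_one] at h
  exact le_trans (le_abs_self _) h

lemma expDD_cons_zero (q : ℕ) (x : Fin (q+1) → ℂ) :
    expDD (Fin.cons 0 x) =
      ∑' k : Fin (q+1) → ℕ, (∏ j, x j ^ k j) / (((q + ∑ j, k j + 1).factorial : ℂ)) := by
  rw [expDD]
  have key : ∀ k : Fin (q+1) → ℕ,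
      (∏ j, (Fin.cons 0 x : Fin (q+2) → ℂ) j ^ (Fin.cons 0 k : Fin (q+2) → ℕ) j) /
        (((q + 1 + ∑ j, (Fin.cons 0 k : Fin (q+2) → ℕ) j).factorial : ℂ))
      = (∏ j, x j ^ k j) / (((q + ∑ j, k j + 1).factorial : ℂ)) := by
    intro k
    rw [Fin.prod_univ_succ, Fin.sum_univ_succ]
    simp only [Fin.cons_zero, Fin.cons_succ, pow_zero, one_mul]
    have h : q + 1 + (0 + ∑ j, k j) = q + ∑ j, k j + 1 := by omega
    rw [h]
  refine tsum_eq_tsum_of_ne_zero_bij (fun k => Fin.cons 0 k.1) ?_ ?_ ?_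
  · intro k1 k2 h
    exact Subtype.ext (Fin.cons_right_injective 0 h)
  · intro k' hk'
    have h0 : k' 0 = 0 := by
      by_contra h0
      apply hk'
      have : (Fin.cons 0 x : Fin (q+2) → ℂ) 0 ^ k' 0 = 0 := by
        rw [Fin.cons_zero, zero_pow h0]
      simp only [Fin.prod_univ_succ, this, zero_mul, zero_div]
    have hk'' : k' = Fin.cons 0 (Fin.tail k') := by
      rw [← h0]; exact (Fin.cons_self_tail k').symm
    refine ⟨⟨Fin.tail k', ?_⟩, hk''.symm⟩
    rw [Function.mem_support, ← key]
    rw [hk''] at hk'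
    exact hk'
  · intro k
    exact key k.1


/-- `∫₀¹ a^q e[a x₀, a x₁, ..., a x_q] da = e[0, x₀, x₁, ..., x_q]`. -/
theorem expDD_integral_scaling (q : ℕ) (x : Fin (q + 1) → ℂ) :
    (∫ a in (0:ℝ)..1, (a : ℂ) ^ q * expDD (fun j => (a : ℂ) * x j)) =
      expDD (Fin.cons 0 x) := by
  set n : (Fin (q+1) → ℕ) → ℕ := fun k => q + ∑ j, k j with hn
  set d : (Fin (q+1) → ℕ) → ℂ := fun k => (∏ j, x j ^ k j) / (((n k).factorial : ℂ)) with hd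
  have hInt : ∀ k, IntegrableOn (fun a : ℝ => (a:ℂ) ^ n k * d k) (Set.Ioc (0:ℝ) 1) volume :=
    fun k => ((Complex.continuous_ofReal.pow _).mul continuous_const).integrableOn_Ioc
  have hNorm : Summable fun k => ‖d k‖ := by
    refine (summable_main q x).congr fun k => ?_
    rw [hd]
    rw [norm_div, norm_prod]
    simp [Complex.norm_natCast, hn]
  have hSum : Summable fun k => ∫ a in Set.Ioc (0:ℝ) 1, ‖(a:ℂ) ^ n k * d k‖ := by
    refine Summable.of_nonneg_of_le
      (fun k => integral_nonneg fun a => norm_nonneg _)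
      (fun k => norm_int_le (n k) (d k)) hNorm
  rw [intervalIntegral.integral_of_le zero_le_one]
  have hfun : (fun a : ℝ => (a : ℂ) ^ q * expDD (fun j => (a : ℂ) * x j)) =
      fun a : ℝ => ∑' k : Fin (q+1) → ℕ, (a:ℂ) ^ n k * d k :=
    funext fun a => expDD_smul q x a
  rw [hfun, ← integral_tsum_of_summable_integral_norm hInt hSum]
  rw [expDD_cons_zero]
  refine tsum_congr fun k => ?_
  rw [MeasureTheory.integral_mul_const, integral_pow_cplx]
  rw [hd, hn]
  have hfac : ((q + ∑ j, k j + 1).factorial : ℂ) =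
      ((q + ∑ j, k j : ℕ) + 1) * ((q + ∑ j, k j).factorial : ℂ) := by
    rw [Nat.factorial_succ]; push_cast; ring
  rw [hfac]
  have h1 : ((q + ∑ j, k j : ℕ) : ℂ) + 1 ≠ 0 := by
    have h := Nat.cast_ne_zero (R := ℂ).mpr (Nat.succ_ne_zero (q + ∑ j, k j))
    rwa [Nat.cast_succ] at h
  have h2 : ((q + ∑ j, k j).factorial : ℂ) ≠ 0 := by
    exact_mod_cast Nat.cast_ne_zero.mpr (Nat.factorial_ne_zero _)
  field_simp
end

section
/- For f(x) = e^{tx} with t real and complex points x₀, ..., x_q, writing e^{t[x₀,...,x_q]} for the divided difference f[x₀,...,x_q], one has for any real τ: ∫₀^τ e^{t[x₀,...,x_q]} dt = e^{τ[0, x₀, ..., x_q]}. -/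
open scoped BigOperators

/-- `e^{t[x₀,...,x_q]}`: the divided difference of `x ↦ e^{t x}` at `x₀,...,x_q`,
via the identity `e^{t[x₀,...,x_q]} = t^q e[t x₀, ..., t x_q]`. -/
noncomputable def expDDt {q : ℕ} (t : ℝ) (x : Fin (q + 1) → ℂ) : ℂ :=
  (t : ℂ) ^ q * expDD (fun j => (t : ℂ) * x j)

lemma summable_pi_prod : ∀ (m : ℕ) (g : Fin m → ℕ → ℝ), (∀ j n, 0 ≤ g j n) →
    (∀ j, Summable (g j)) → Summable (fun k : Fin m → ℕ => ∏ j, g j (k j)) := by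
  intro m
  induction m with
  | zero =>
    intro g _ _
    simp only [Finset.univ_eq_empty, Finset.prod_empty]
    exact summable_of_finite_support (Set.toFinite _)
  | succ n ih =>
    intro g hg hsum
    have htail : Summable (fun k : Fin n → ℕ => ∏ j, g j.succ (k j)) :=
      ih (fun j => g j.succ) (fun j k => hg _ _) (fun j => hsum _)
    have h2 : Summable (fun p : ℕ × (Fin n → ℕ) => g 0 p.1 * ∏ j, g j.succ (p.2 j)) := by
      apply Summable.mul_of_nonneg (hsum 0) htail
      · exact hg 0
      · exact fun k => Finset.prod_nonneg fun j _ => hg _ _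
    have h3 := h2.comp_injective
      (i := fun k : Fin (n+1) → ℕ => ((k 0, fun j => k j.succ) : ℕ × (Fin n → ℕ)))
      (fun a b hab => by
        have e1 := congrArg Prod.fst hab
        have e2 := congrArg Prod.snd hab
        funext i
        refine Fin.cases ?_ ?_ i
        · exact e1
        · exact fun i => congrFun e2 i)
    refine h3.congr fun k => ?_
    simp [Fin.prod_univ_succ]

lemma expDDt_eq_tsum {q : ℕ} (t : ℝ) (x : Fin (q + 1) → ℂ) :
    expDDt t x = ∑' k : Fin (q + 1) → ℕ,
      (t : ℂ) ^ (q + ∑ j, k j) * (∏ j, x j ^ k j) / (Nat.factorial (q + ∑ j, k j) : ℂ) := by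
  rw [expDDt, expDD, ← tsum_mul_left]
  refine tsum_congr fun k => ?_
  rw [pow_add]
  simp only [mul_pow, Finset.prod_mul_distrib, Finset.prod_pow_eq_pow_sum]
  ring

lemma norm_term_le {q : ℕ} (x : Fin (q + 1) → ℂ) {t R : ℝ} (h : |t| ≤ R)
    (k : Fin (q + 1) → ℕ) :
    ‖(t : ℂ) ^ (q + ∑ j, k j) * (∏ j, x j ^ k j) / (Nat.factorial (q + ∑ j, k j) : ℂ)‖
      ≤ R ^ q * ∏ j, (R * ‖x j‖) ^ k j / (Nat.factorial (k j) : ℝ) := by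
  have hR : 0 ≤ R := (abs_nonneg t).trans h
  have hnorm : ‖(t : ℂ) ^ (q + ∑ j, k j) * (∏ j, x j ^ k j) /
      (Nat.factorial (q + ∑ j, k j) : ℂ)‖
      = |t| ^ (q + ∑ j, k j) * (∏ j, ‖x j‖ ^ k j) / (Nat.factorial (q + ∑ j, k j) : ℝ) := by
    rw [norm_div, norm_mul, norm_pow, norm_prod]
    simp [Complex.norm_natCast]
  rw [hnorm]
  have hrhs : R ^ q * ∏ j, (R * ‖x j‖) ^ k j / (Nat.factorial (k j) : ℝ)
      = R ^ (q + ∑ j, k j) * (∏ j, ‖x j‖ ^ k j) / (∏ j, (Nat.factorial (k j) : ℝ)) := by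
    rw [Finset.prod_div_distrib, pow_add]
    simp only [mul_pow, Finset.prod_mul_distrib, Finset.prod_pow_eq_pow_sum]
    ring
  rw [hrhs]
  set n := ∑ j, k j with hn
  set P := ∏ j, ‖x j‖ ^ k j with hP
  set D := ∏ j, (Nat.factorial (k j) : ℝ) with hD
  set F := (Nat.factorial (q + n) : ℝ) with hFd
  have hP0 : 0 ≤ P := Finset.prod_nonneg fun j _ => pow_nonneg (norm_nonneg _) _
  have hD0 : 0 < D := Finset.prod_pos fun j _ => by exact_mod_cast Nat.factorial_pos _
  have hfact : D ≤ F := by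
    rw [hD, hFd, ← Nat.cast_prod]
    exact_mod_cast Nat.le_of_dvd (Nat.factorial_pos _)
      ((Nat.prod_factorial_dvd_factorial_sum _ _).trans
        (Nat.factorial_dvd_factorial (Nat.le_add_left _ _)))
  have ht : |t| ^ (q + n) ≤ R ^ (q + n) := pow_le_pow_left₀ (abs_nonneg t) h _
  exact div_le_div₀ (mul_nonneg (pow_nonneg hR _) hP0)
    (mul_le_mul_of_nonneg_right ht hP0) hD0 hfact

lemma summable_bound {q : ℕ} (x : Fin (q + 1) → ℂ) {R : ℝ} (hR : 0 ≤ R) :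
    Summable (fun k : Fin (q + 1) → ℕ =>
      R ^ q * ∏ j, (R * ‖x j‖) ^ k j / (Nat.factorial (k j) : ℝ)) := by
  have h := summable_pi_prod (q + 1) (fun j n => (R * ‖x j‖) ^ n / (Nat.factorial n : ℝ))
    (fun j n => div_nonneg (pow_nonneg (mul_nonneg hR (norm_nonneg _)) _) (Nat.cast_nonneg _))
    (fun j => Real.summable_pow_div_factorial _)
  apply Summable.mul_left _ h

lemma summable_term {q : ℕ} (x : Fin (q + 1) → ℂ) (t : ℝ) :
    Summable (fun k : Fin (q + 1) → ℕ =>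
      (t : ℂ) ^ (q + ∑ j, k j) * (∏ j, x j ^ k j) / (Nat.factorial (q + ∑ j, k j) : ℂ)) := by
  apply Summable.of_norm_bounded (summable_bound x (abs_nonneg t))
  exact fun k => norm_term_le x le_rfl k

lemma tsum_cons_zero {q : ℕ} (f : (Fin (q + 1 + 1) → ℕ) → ℂ)
    (h0 : ∀ k', k' 0 ≠ 0 → f k' = 0) :
    (∑' k', f k') = ∑' k : Fin (q + 1) → ℕ, f (Fin.cons 0 k) := by
  refine (Function.Injective.tsum_eq (f := f)
    (g := fun k : Fin (q + 1) → ℕ => (Fin.cons 0 k : Fin (q + 1 + 1) → ℕ))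
    (Fin.cons_right_injective (α := fun _ : Fin (q + 1 + 1) => ℕ) 0) ?_).symm
  intro k' hk'
  rcases Nat.eq_zero_or_pos (k' 0) with hz | hz
  · refine ⟨Fin.tail k', ?_⟩
    show Fin.cons 0 (Fin.tail k') = k'
    rw [← hz]
    exact Fin.cons_self_tail k'
  · exact absurd (h0 k' hz.ne') hk'

lemma expDDt_cons_eq_tsum {q : ℕ} (τ : ℝ) (x : Fin (q + 1) → ℂ) :
    expDDt τ (Fin.cons 0 x) = ∑' k : Fin (q + 1) → ℕ,
      (τ : ℂ) ^ (q + 1 + ∑ j, k j) * (∏ j, x j ^ k j)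
        / (Nat.factorial (q + 1 + ∑ j, k j) : ℂ) := by
  rw [expDDt_eq_tsum, tsum_cons_zero]
  · refine tsum_congr fun k => ?_
    rw [Fin.sum_cons, Fin.prod_univ_succ, Fin.cons_zero]
    simp only [Fin.cons_zero, Fin.cons_succ, pow_zero, one_mul, zero_add]
  · intro k' hk'
    have hz : (∏ j, (Fin.cons 0 x : Fin (q + 1 + 1) → ℂ) j ^ k' j) = 0 := by
      rw [Fin.prod_univ_succ, Fin.cons_zero, zero_pow hk']
      ring
    rw [hz]
    simp

/-- `∫₀^τ e^{t[x₀,...,x_q]} dt = e^{τ[0, x₀, ..., x_q]}`. -/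
theorem expDDt_integral (q : ℕ) (x : Fin (q + 1) → ℂ) (τ : ℝ) :
    (∫ t in (0:ℝ)..τ, expDDt t x) = expDDt τ (Fin.cons 0 x) := by
  have habs : ∀ t ∈ Set.uIoc (0:ℝ) τ, |t| ≤ |τ| := by
    intro t ht
    rcases Set.mem_uIoc.mp ht with ⟨h1, h2⟩ | ⟨h1, h2⟩ <;> rw [abs_le] <;>
      constructor <;> nlinarith [le_abs_self τ, neg_abs_le τ]
  have key : HasSum (fun k : Fin (q + 1) → ℕ => ∫ t in (0:ℝ)..τ,
      (t : ℂ) ^ (q + ∑ j, k j) * (∏ j, x j ^ k j) / (Nat.factorial (q + ∑ j, k j) : ℂ))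
      (∫ t in (0:ℝ)..τ, expDDt t x) := by
    apply intervalIntegral.hasSum_integral_of_dominated_convergence
      (fun k _ => |τ| ^ q * ∏ j, (|τ| * ‖x j‖) ^ k j / (Nat.factorial (k j) : ℝ))
    · intro k
      apply Continuous.aestronglyMeasurable
      apply Continuous.div_const
      exact (Complex.continuous_ofReal.pow _).mul continuous_const
    · intro k
      filter_upwards with t ht
      exact norm_term_le x (habs t ht) k
    · filter_upwards with t ht
      exact (summable_bound x (abs_nonneg τ))
    · exact intervalIntegrable_const
    · filter_upwards with t ht
      rw [expDDt_eq_tsum]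
      exact (summable_term x t).hasSum
  have int_eq : ∀ k : Fin (q + 1) → ℕ, (∫ t in (0:ℝ)..τ,
      (t : ℂ) ^ (q + ∑ j, k j) * (∏ j, x j ^ k j) / (Nat.factorial (q + ∑ j, k j) : ℂ))
      = (τ : ℂ) ^ (q + 1 + ∑ j, k j) * (∏ j, x j ^ k j)
        / (Nat.factorial (q + 1 + ∑ j, k j) : ℂ) := by
    intro k
    set n := q + ∑ j, k j with hn
    set c := ∏ j, x j ^ k j with hc
    have h1 : (∫ t in (0:ℝ)..τ, (t : ℂ) ^ n * c / (Nat.factorial n : ℂ))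
        = (∫ t in (0:ℝ)..τ, (t : ℂ) ^ n) * c / (Nat.factorial n : ℂ) := by
      rw [intervalIntegral.integral_div, intervalIntegral.integral_mul_const]
    have h2 : (∫ t in (0:ℝ)..τ, (t : ℂ) ^ n) = ((τ ^ (n + 1) / (n + 1) : ℝ) : ℂ) := by
      have h3 : (∫ t in (0:ℝ)..τ, (t : ℂ) ^ n) = (((∫ t in (0:ℝ)..τ, t ^ n) : ℝ) : ℂ) := by
        rw [← intervalIntegral.integral_ofReal]
        norm_num
      rw [h3, integral_pow]
      norm_num
    rw [h1, h2]
    have hexp : q + 1 + ∑ j, k j = n + 1 := by omega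
    rw [hexp, Nat.factorial_succ]
    have hne1 : ((n : ℂ) + 1) ≠ 0 := by exact_mod_cast Nat.succ_ne_zero n
    have hne2 : ((Nat.factorial n : ℕ) : ℂ) ≠ 0 := by
      exact_mod_cast Nat.factorial_ne_zero n
    push_cast
    field_simp
    try ring
  rw [← key.tsum_eq, tsum_congr int_eq, ← expDDt_cons_eq_tsum]
end

section
/- Let W be a unitary on ℋ_anc ⊗ ℋ with the property that for every state |ψ⟩, W|0⟩|ψ⟩ = (1/s)|0⟩Ũ|ψ⟩ + √(1 − 1/s²)|Φ_ψ⟩ where Ũ is unitary, s = 2, and (|0⟩⟨0| ⊗ I)|Φ_ψ⟩ = 0. Define P = |0⟩⟨0| ⊗ I, R = I − 2P, and A = −W R W† R W. Then A|0⟩|ψ⟩ = |0⟩Ũ|ψ⟩ for every |ψ⟩. -/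
open ContinuousLinearMap

/-- oblivious amplitude amplification, exact case `s = 2`.
The composite space `ℋ_anc ⊗ ℋ` is modeled by a Hilbert space `K` together with
the isometric embedding `J : ψ ↦ |0⟩ ⊗ ψ` (so `J† ∘ J = 1`), and
`P = |0⟩⟨0| ⊗ I` is the orthogonal projection `J ∘ J†`.  If the unitary `W`
satisfies `W J ψ = (1/s) J (Ũ ψ) + √(1 − 1/s²) Φ_ψ` with `s = 2`, `Ũ` unitary and
`P Φ_ψ = 0`, then with `R = I − 2P` and `A = −W R W† R W` one has
`A J ψ = J (Ũ ψ)` for every `ψ`. -/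
theorem oblivious_amplitude_amplification
    {H K : Type*} [NormedAddCommGroup H] [InnerProductSpace ℂ H]
    [FiniteDimensional ℂ H]
    [NormedAddCommGroup K] [InnerProductSpace ℂ K] [FiniteDimensional ℂ K]
    (J : H →L[ℂ] K) (hJ : adjoint J ∘L J = 1)
    (W : K →L[ℂ] K) (hW : W ∈ unitary (K →L[ℂ] K))
    (Utilde : H →L[ℂ] H) (hUt : Utilde ∈ unitary (H →L[ℂ] H))
    (Φ : H → K)
    (hact : ∀ ψ : H, W (J ψ) =
      ((2 : ℂ)⁻¹) • J (Utilde ψ) +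
        ((Real.sqrt (1 - ((2 : ℝ)⁻¹) ^ 2) : ℝ) : ℂ) • Φ ψ)
    (hΦ : ∀ ψ : H, (J ∘L adjoint J) (Φ ψ) = 0) :
    ∀ ψ : H,
      (-(W ∘L (1 - (2 : ℂ) • (J ∘L adjoint J)) ∘L adjoint W ∘L
          (1 - (2 : ℂ) • (J ∘L adjoint J)) ∘L W)) (J ψ) = J (Utilde ψ) := by
  set c : ℂ := ((Real.sqrt (1 - ((2 : ℝ)⁻¹) ^ 2) : ℝ) : ℂ) with hc
  have hJJ : ∀ x : H, adjoint J (J x) = x := fun x => by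
    have := ContinuousLinearMap.ext_iff.mp hJ x
    simpa using this
  have hWW : ∀ x : K, adjoint W (W x) = x := fun x => by
    have := ContinuousLinearMap.ext_iff.mp hW.1 x
    simpa [ContinuousLinearMap.mul_apply, ContinuousLinearMap.star_eq_adjoint] using this
  have hWW' : ∀ x : K, W (adjoint W x) = x := fun x => by
    have := ContinuousLinearMap.ext_iff.mp hW.2 x
    simpa [ContinuousLinearMap.mul_apply, ContinuousLinearMap.star_eq_adjoint] using this
  have hUU : ∀ x : H, adjoint Utilde (Utilde x) = x := fun x => by
    have := ContinuousLinearMap.ext_iff.mp hUt.1 x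
    simpa [ContinuousLinearMap.mul_apply, ContinuousLinearMap.star_eq_adjoint] using this
  have hΦ0 : ∀ ψ : H, adjoint J (Φ ψ) = 0 := fun ψ => by
    have := congrArg (adjoint J) (hΦ ψ)
    simpa [ContinuousLinearMap.comp_apply, hJJ] using this
  -- key: J† W† J Ũψ = (1/2) ψ
  have hkey : ∀ ψ : H, adjoint J (adjoint W (J (Utilde ψ))) = (2 : ℂ)⁻¹ • ψ := by
    intro ψ
    refine ext_inner_left ℂ (fun v => ?_)
    rw [adjoint_inner_right, adjoint_inner_right, hact v, inner_add_left,
      inner_smul_left, inner_smul_left]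
    have h1 : (inner ℂ (J (Utilde v)) (J (Utilde ψ)) : ℂ) = inner ℂ v ψ := by
      rw [← adjoint_inner_right J, hJJ, ← adjoint_inner_right Utilde, hUU]
    have h2 : (inner ℂ (Φ v) (J (Utilde ψ)) : ℂ) = 0 := by
      rw [← adjoint_inner_left J, hΦ0, inner_zero_left]
    rw [h1, h2, inner_smul_right]
    simp only [mul_zero, add_zero]
    rw [map_inv₀, Complex.conj_ofNat]
  intro ψ
  have hPa : (J ∘L adjoint J) (J (Utilde ψ)) = J (Utilde ψ) := by
    simp [ContinuousLinearMap.comp_apply, hJJ]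
  have hPWa : (J ∘L adjoint J) (adjoint W (J (Utilde ψ))) = (2 : ℂ)⁻¹ • J ψ := by
    simp [ContinuousLinearMap.comp_apply, hkey ψ, map_smul]
  have hPJ : (J ∘L adjoint J) (J ψ) = J ψ := by
    simp [ContinuousLinearMap.comp_apply, hJJ]
  -- step 1: R W Jψ
  have h1 : (1 - (2 : ℂ) • (J ∘L adjoint J)) (W (J ψ))
      = W (J ψ) - J (Utilde ψ) := by
    simp only [ContinuousLinearMap.sub_apply, ContinuousLinearMap.smul_apply,
      ContinuousLinearMap.one_apply]
    rw [hact ψ]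
    simp only [map_add, map_smul, hPa, hΦ ψ, smul_zero, add_zero]
    rw [← hact ψ]
    rw [smul_smul]
    norm_num
  -- step 2: W† R W Jψ
  have h2 : adjoint W ((1 - (2 : ℂ) • (J ∘L adjoint J)) (W (J ψ)))
      = J ψ - adjoint W (J (Utilde ψ)) := by
    rw [h1, map_sub, hWW]
  -- step 3: R W† R W Jψ
  have h3 : (1 - (2 : ℂ) • (J ∘L adjoint J))
      (adjoint W ((1 - (2 : ℂ) • (J ∘L adjoint J)) (W (J ψ))))
      = - adjoint W (J (Utilde ψ)) := by
    rw [h2]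
    simp only [ContinuousLinearMap.sub_apply, ContinuousLinearMap.smul_apply,
      ContinuousLinearMap.one_apply, map_sub, hPJ, hPWa]
    rw [smul_smul]
    norm_num [two_smul]
    abel
  -- finish
  simp only [ContinuousLinearMap.neg_apply, ContinuousLinearMap.comp_apply]
  rw [h3]
  rw [map_neg, hWW', neg_neg]
end
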